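/- For a nonseparable Banach space X the following are equivalent: (1) X is hyperlateral; (2) for every s > 0 there is ε > 0 such that no uncountable s-separated set Y ⊆ X contains an uncountable ε-approximately equilateral subset; (3) the unit sphere S_X is hyperlateral; (4) for every r with 0 < r ≤ 2 there is ε > 0 such that there is no uncountable Y ⊆ S_X with r − ε < ‖y − y'‖ < r + ε for all distinct y, y' ∈ Y; (5) there is ε > 0 such that there is no uncountable Y ⊆ S_X with 1 − ε < ‖y − y'‖ < 1 + ε for all distinct y, y' ∈ Y. -/
import Mathlib


section

variable {X : Type*} [NormedAddCommGroup X]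

/-- `N` is `s`-separated: all distances between distinct points are at least `s`. -/
def IsSep (N : Set X) (s : ℝ) : Prop :=
  ∀ x ∈ N, ∀ y ∈ N, x ≠ y → s ≤ ‖x - y‖

/-- `N` is `ε`-approximately `r`-equilateral: all distances between distinct points
lie strictly between `r - ε` and `r + ε`. -/
def ApproxEquilateral (N : Set X) (ε r : ℝ) : Prop :=
  ∀ x ∈ N, ∀ y ∈ N, x ≠ y → r - ε < ‖x - y‖ ∧ ‖x - y‖ < r + ε

/-- `M` is hyperlateral if for every uncountable separated `N ⊆ M` there is `ε > 0`
such that `N` contains no uncountable `ε`-approximately equilateral subset. -/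
def Hyperlateral (M : Set X) : Prop :=
  ∀ N ⊆ M, ¬N.Countable → (∃ s > (0 : ℝ), IsSep N s) →
    ∃ ε > (0 : ℝ), ¬∃ N' ⊆ N, ¬N'.Countable ∧ ∃ r > (0 : ℝ), ApproxEquilateral N' ε r

/- STATEMENT 8: For a nonseparable Banach space `X` the following are equivalent:
(1) `X` is hyperlateral;
(2) for every `s > 0` there is `ε > 0` such that no uncountable `s`-separated subset
    of `X` contains an uncountable `ε`-approximately equilateral subset;
(3) the unit sphere of `X` is hyperlateral;
(4) for every `0 < r ≤ 2` there is `ε > 0` such that there is no uncountable subset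
    of the unit sphere all of whose distances lie strictly between `r - ε` and `r + ε`;
(5) there is `ε > 0` such that there is no uncountable subset of the unit sphere all
    of whose distances lie strictly between `1 - ε` and `1 + ε`. -/
lemma uncountable_image {α β : Type*} {f : α → β} {s : Set α} (hinj : Set.InjOn f s)
    (hs : ¬s.Countable) : ¬(f '' s).Countable := by
  intro h
  apply hs
  rw [← Set.countable_coe_iff] at h ⊢
  exact Function.Injective.countable
    (f := fun x : s => (⟨f x, Set.mem_image_of_mem f x.2⟩ : f '' s))
    (fun x y hxy => Subtype.ext (hinj x.2 y.2 (Subtype.ext_iff.1 hxy)))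

lemma aux_inv (a r ε : ℝ) (hr : 0 < r) (ha : 0 < a) (h : |a - r| < ε) :
    |a⁻¹ - r⁻¹| * a < ε / r := by
  have h1 : a⁻¹ - r⁻¹ = (r - a) / (a * r) := by field_simp
  rw [h1, abs_div, abs_of_pos (mul_pos ha hr)]
  rw [div_mul_eq_mul_div, abs_sub_comm]
  rw [div_lt_div_iff₀ (mul_pos ha hr) hr]
  calc |a - r| * a * r = |a - r| * (a * r) := by ring
    _ < ε * (a * r) := mul_lt_mul_of_pos_right h (mul_pos ha hr)

lemma keyL [NormedSpace ℝ X] {ε₁ ε r : ℝ} (hε : 0 < ε) (h1 : 3 * ε ≤ ε₁ * r)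
    (h2 : 3 * ε < r) {N' : Set X} (hN : ¬N'.Countable)
    (happ : ApproxEquilateral N' ε r) :
    ∃ Y ⊆ {x : X | ‖x‖ = 1}, ¬Y.Countable ∧ ApproxEquilateral Y ε₁ 1 := by
  have hr : 0 < r := by linarith
  obtain ⟨x₀, hx₀⟩ : N'.Nonempty := by
    rcases Set.eq_empty_or_nonempty N' with h | h
    · exact absurd (h ▸ Set.countable_empty) hN
    · exact h
  set N'' : Set X := N' \ {x₀} with hN''def
  have hN'' : ¬N''.Countable := by
    intro h
    apply hN
    apply (h.insert x₀).mono
    intro z hz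
    by_cases hzx : z = x₀
    · exact hzx ▸ Set.mem_insert _ _
    · exact Set.mem_insert_of_mem _ ⟨hz, hzx⟩
  set g : X → X := fun y => ‖y - x₀‖⁻¹ • (y - x₀) with hgdef
  -- basic facts for y ∈ N''
  have hmem : ∀ y ∈ N'', y ≠ x₀ ∧ r - ε < ‖y - x₀‖ ∧ ‖y - x₀‖ < r + ε := by
    intro y hy
    have hyx : y ≠ x₀ := hy.2
    exact ⟨hyx, (happ y hy.1 x₀ hx₀ hyx).1, (happ y hy.1 x₀ hx₀ hyx).2⟩
  have hnz : ∀ y ∈ N'', y - x₀ ≠ 0 := by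
    intro y hy
    have := (hmem y hy).2.1
    intro h0
    rw [h0] at this; simp at this; linarith
  have hsphere : ∀ y ∈ N'', ‖g y‖ = 1 := by
    intro y hy
    exact norm_smul_inv_norm (𝕜 := ℝ) (hnz y hy)
  -- distance to the scaled point
  have hclose : ∀ y ∈ N'', dist (g y) (r⁻¹ • (y - x₀)) < ε / r := by
    intro y hy
    have hpos : 0 < ‖y - x₀‖ := norm_pos_iff.2 (hnz y hy)
    have : g y - r⁻¹ • (y - x₀) = (‖y - x₀‖⁻¹ - r⁻¹) • (y - x₀) := by
      rw [sub_smul]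
    rw [dist_eq_norm, this, norm_smul, Real.norm_eq_abs]
    apply aux_inv _ _ _ hr hpos
    rw [abs_lt]
    constructor <;> [linarith [(hmem y hy).2.1]; linarith [(hmem y hy).2.2]]
  have hmid : ∀ y ∈ N'', ∀ y' ∈ N'',
      dist (r⁻¹ • (y - x₀)) (r⁻¹ • (y' - x₀)) = ‖y - y'‖ / r := by
    intro y _ y' _
    rw [dist_eq_norm, ← smul_sub, sub_sub_sub_cancel_right, norm_smul, Real.norm_eq_abs,
      abs_of_pos (inv_pos.2 hr)]
    ring
  have h3r : 3 * ε / r ≤ ε₁ := by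
    rw [div_le_iff₀ hr] at *
    nlinarith
  have h3r1 : 3 * ε / r < 1 := by rw [div_lt_one hr]; linarith
  have hdistbd : ∀ y ∈ N'', ∀ y' ∈ N'', y ≠ y' →
      1 - ε₁ < ‖g y - g y'‖ ∧ ‖g y - g y'‖ < 1 + ε₁ ∧ 1 - 3 * ε / r < ‖g y - g y'‖ := by
    intro y hy y' hy' hne
    have hyy' : r - ε < ‖y - y'‖ ∧ ‖y - y'‖ < r + ε := happ y hy.1 y' hy'.1 hne
    have c1 := hclose y hy
    have c2 := hclose y' hy'
    have cm := hmid y hy y' hy'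
    have t1 : dist (g y) (g y') ≤ dist (g y) (r⁻¹ • (y - x₀)) +
        dist (r⁻¹ • (y - x₀)) (r⁻¹ • (y' - x₀)) + dist (r⁻¹ • (y' - x₀)) (g y') :=
      dist_triangle4 _ _ _ _
    have t2 : dist (r⁻¹ • (y - x₀)) (r⁻¹ • (y' - x₀)) ≤ dist (r⁻¹ • (y - x₀)) (g y) +
        dist (g y) (g y') + dist (g y') (r⁻¹ • (y' - x₀)) := dist_triangle4 _ _ _ _
    rw [cm] at t1 t2
    have c1' : dist (r⁻¹ • (y - x₀)) (g y) < ε / r := by rwa [dist_comm]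
    have c2' : dist (r⁻¹ • (y' - x₀)) (g y') < ε / r := by rwa [dist_comm]
    have hgd : dist (g y) (g y') = ‖g y - g y'‖ := dist_eq_norm _ _
    rw [hgd] at t1 t2
    have hub : ‖y - y'‖ / r < (r + ε) / r := by gcongr; exact hyy'.2
    have hlb : (r - ε) / r < ‖y - y'‖ / r := by gcongr; exact hyy'.1
    have e1 : (r + ε) / r = 1 + ε / r := by field_simp
    have e2 : (r - ε) / r = 1 - ε / r := by field_simp
    have e3 : 3 * ε / r = ε / r + ε / r + ε / r := by ring
    exact ⟨by linarith, by linarith, by linarith⟩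
  have hinj : Set.InjOn g N'' := by
    intro y hy y' hy' heq
    by_contra hne
    have h3 := (hdistbd y hy y' hy' hne).2.2
    rw [heq, sub_self, norm_zero] at h3
    linarith
  refine ⟨g '' N'', ?_, uncountable_image hinj hN'', ?_⟩
  · rintro u ⟨y, hy, rfl⟩
    exact hsphere y hy
  · rintro u ⟨y, hy, rfl⟩ v ⟨y', hy', rfl⟩ hne
    have hyne : y ≠ y' := fun h => hne (by rw [h])
    exact ⟨(hdistbd y hy y' hy' hyne).1, (hdistbd y hy y' hy' hyne).2.1⟩

def badSet (U P : Set X) : Set X := P ∪ ⋃ p ∈ P, {y | y ∈ U ∧ ‖p - y‖ < 1/6}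

open Cardinal in
lemma combine (Y : ℕ → Set X) (hY : ∀ n, ¬(Y n).Countable)
    (hsep : ∀ n, ∀ x ∈ Y n, ∀ y ∈ Y n, x ≠ y → (1:ℝ)/2 ≤ ‖x - y‖) :
    ∃ S : ℕ → Set X, (∀ n, S n ⊆ Y n) ∧ (∀ n, ¬(S n).Countable) ∧
      ∀ x ∈ ⋃ n, S n, ∀ y ∈ ⋃ n, S n, x ≠ y → (1:ℝ)/6 ≤ ‖x - y‖ := by
  classical
  set U : Set X := ⋃ n, Y n with hU
  -- neighborhoods are countable
  have hNbr : ∀ p : X, ({y | y ∈ U ∧ ‖p - y‖ < 1/6} : Set X).Countable := by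
    intro p
    have heq : {y | y ∈ U ∧ ‖p - y‖ < 1/6} = ⋃ n, {y | y ∈ Y n ∧ ‖p - y‖ < 1/6} := by
      ext z
      simp only [Set.mem_setOf_eq, Set.mem_iUnion, hU]
      tauto
    rw [heq]
    refine Set.countable_iUnion fun n => Set.Subsingleton.countable ?_
    rintro a ⟨ha, hpa⟩ b ⟨hb, hpb⟩
    by_contra hab
    have hd := hsep n a ha b hb hab
    have habe : a - b = (p - b) - (p - a) := by abel
    have : ‖a - b‖ ≤ ‖p - b‖ + ‖p - a‖ := by
      rw [habe]; exact norm_sub_le _ _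
    linarith
  have hBad : ∀ P : Set X, P.Countable → (badSet U P).Countable :=
    fun P hP => hP.union (hP.biUnion fun p _ => hNbr p)
  -- the well-ordered index type
  let W := (Cardinal.aleph 1 : Cardinal.{0}).ord.ToType
  have hWcard : #W = Cardinal.aleph 1 := by
    rw [Cardinal.mk_toType, Cardinal.card_ord]
  have hWunc : ¬Countable W := by
    intro h
    have := Cardinal.mk_le_aleph0_iff.2 h
    rw [hWcard] at this
    exact absurd (lt_of_lt_of_le Cardinal.aleph0_lt_aleph_one this) (lt_irrefl _)
  have hIio : ∀ a : W, (Set.Iio a).Countable := fun a =>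
    (Cardinal.countable_iff_lt_aleph_one _).2 (Cardinal.mk_Iio_ord_toType a)
  -- a block assignment with uncountable fibers
  have hWN : #(W × ℕ) = #W := by
    rw [Cardinal.mk_prod, Cardinal.lift_id, Cardinal.lift_id, Cardinal.mk_nat, hWcard,
      Cardinal.mul_eq_max (Cardinal.aleph0_le_aleph 1) le_rfl,
      max_eq_left (Cardinal.aleph0_le_aleph 1)]
  obtain ⟨e⟩ : Nonempty (W ≃ W × ℕ) := Cardinal.eq.1 hWN.symm
  set φ : W → ℕ := fun w => (e w).2 with hφ
  have hfib : ∀ n : ℕ, ¬(φ ⁻¹' {n} : Set W).Countable := by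
    intro n hc
    have hginj : Function.Injective (fun w : W => e.symm (w, n)) := by
      intro a b hab
      have h := e.symm.injective hab
      exact congrArg Prod.fst h
    have hsub : Set.range (fun w : W => e.symm (w, n)) ⊆ φ ⁻¹' {n} := by
      rintro _ ⟨w, rfl⟩
      simp [hφ]
    have h1 : (Set.range (fun w : W => e.symm (w, n))).Countable := hc.mono hsub
    have h2 := h1.preimage hginj
    rw [Set.preimage_range] at h2
    exact hWunc (Set.countable_univ_iff.1 h2)
  -- the recursive pick
  have pickex : ∀ (a : W) (ih : ∀ b : W, b < a → X),
      ∃ x, x ∈ Y (φ a) ∧ x ∉ badSet U {x | ∃ b, ∃ h : b < a, ih b h = x} := by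
    intro a ih
    have hPc : ({x | ∃ b, ∃ h : b < a, ih b h = x} : Set X).Countable := by
      have hre : {x | ∃ b, ∃ h : b < a, ih b h = x} =
          Set.range (fun b : (Set.Iio a) => ih b.1 b.2) := by
        ext z
        constructor
        · rintro ⟨b, h, rfl⟩; exact ⟨⟨b, h⟩, rfl⟩
        · rintro ⟨⟨b, h⟩, rfl⟩; exact ⟨b, h, rfl⟩
      rw [hre]
      have := (hIio a).to_subtype
      exact Set.countable_range _
    have hb := hBad _ hPc
    have hns : ¬(Y (φ a) ⊆ badSet U {x | ∃ b, ∃ h : b < a, ih b h = x}) :=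
      fun hsub => hY _ (hb.mono hsub)
    obtain ⟨x, hx1, hx2⟩ := Set.not_subset.1 hns
    exact ⟨x, hx1, hx2⟩
  let f : W → X := WellFounded.fix wellFounded_lt (fun a ih => (pickex a ih).choose)
  have hfeq : ∀ a : W, f a = (pickex a (fun b _ => f b)).choose := fun a =>
    WellFounded.fix_eq _ _ a
  have hspec : ∀ a : W, f a ∈ Y (φ a) ∧
      f a ∉ badSet U {x | ∃ b, ∃ h : b < a, f b = x} := fun a => by
    rw [hfeq a]
    exact (pickex a (fun b _ => f b)).choose_spec
  have hfY : ∀ a, f a ∈ Y (φ a) := fun a => (hspec a).1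
  have hfU : ∀ a, f a ∈ U := fun a => Set.mem_iUnion.2 ⟨φ a, hfY a⟩
  have hlt : ∀ a b : W, b < a → f a ≠ f b ∧ (1:ℝ)/6 ≤ ‖f b - f a‖ := by
    intro a b hb
    have h2 := (hspec a).2
    have hPmem : f b ∈ {x | ∃ b', ∃ h : b' < a, f b' = x} := ⟨b, hb, rfl⟩
    constructor
    · intro heq
      exact h2 (Set.mem_union_left _ ⟨b, hb, heq.symm⟩)
    · by_contra h6
      push_neg at h6
      exact h2 (Set.mem_union_right _ (Set.mem_biUnion hPmem ⟨hfU a, by linarith⟩))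
  have hpair : ∀ a b : W, a ≠ b → f a ≠ f b ∧ (1:ℝ)/6 ≤ ‖f a - f b‖ := by
    intro a b hne
    rcases lt_or_gt_of_ne hne with h | h
    · have h' := hlt b a h
      exact ⟨fun he => h'.1 he.symm, h'.2⟩
    · have h' := hlt a b h
      rw [norm_sub_rev] at h'
      exact ⟨h'.1, h'.2⟩
  have hfinj : Function.Injective f := fun a b hab => by
    by_contra hne
    exact (hpair a b hne).1 hab
  refine ⟨fun n => f '' (φ ⁻¹' {n}), ?_, ?_, ?_⟩
  · rintro n _ ⟨a, ha, rfl⟩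
    have han : φ a = n := ha
    exact han ▸ hfY a
  · intro n
    exact uncountable_image hfinj.injOn (hfib n)
  · rintro x hx y hy hxy
    obtain ⟨n, hn⟩ := Set.mem_iUnion.1 hx
    obtain ⟨a, _, rfl⟩ := hn
    obtain ⟨m, hm⟩ := Set.mem_iUnion.1 hy
    obtain ⟨b, _, rfl⟩ := hm
    exact (hpair a b fun h => hxy (by rw [h])).2

theorem stmt8 [NormedSpace ℝ X] [CompleteSpace X]
    (hnonsep : ¬TopologicalSpace.SeparableSpace X) :
    List.TFAE
      [ Hyperlateral (Set.univ : Set X),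
        ∀ s > (0 : ℝ), ∃ ε > (0 : ℝ), ∀ Y : Set X, ¬Y.Countable → IsSep Y s →
          ¬∃ N' ⊆ Y, ¬N'.Countable ∧ ∃ r > (0 : ℝ), ApproxEquilateral N' ε r,
        Hyperlateral {x : X | ‖x‖ = 1},
        ∀ r : ℝ, 0 < r → r ≤ 2 → ∃ ε > (0 : ℝ),
          ¬∃ Y ⊆ {x : X | ‖x‖ = 1}, ¬Y.Countable ∧ ApproxEquilateral Y ε r,
        ∃ ε > (0 : ℝ),
          ¬∃ Y ⊆ {x : X | ‖x‖ = 1}, ¬Y.Countable ∧ ApproxEquilateral Y ε 1 ] := by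
  tfae_have 2 → 1 := by
    intro h2 N _ hN hsep
    obtain ⟨s, hs, hsepN⟩ := hsep
    obtain ⟨ε, hε, h⟩ := h2 s hs
    exact ⟨ε, hε, h N hN hsepN⟩
  tfae_have 1 → 3 := by
    intro h1 N hNs hN hsep
    exact h1 N (Set.subset_univ N) hN hsep
  tfae_have 3 → 5 := by
    intro h3
    by_contra h5
    push_neg at h5
    have h5' : ∀ n : ℕ, ∃ Y, Y ⊆ {x : X | ‖x‖ = 1} ∧ ¬Y.Countable ∧
        ApproxEquilateral Y (1/(n+2)) 1 := by
      intro n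
      have hpos : (0:ℝ) < 1/((n:ℝ)+2) := by positivity
      obtain ⟨Y, h₁, h₂, h₃⟩ := h5 _ hpos
      exact ⟨Y, h₁, h₂, h₃⟩
    choose Yf hsub hunc happ using h5'
    have hhalf : ∀ n : ℕ, (1:ℝ)/((n:ℝ)+2) ≤ 1/2 := by
      intro n
      have h2n : (2:ℝ) ≤ (n:ℝ)+2 := by
        have := Nat.cast_nonneg (α := ℝ) n
        linarith
      exact one_div_le_one_div_of_le two_pos h2n
    have hsepY : ∀ n, ∀ x ∈ Yf n, ∀ y ∈ Yf n, x ≠ y → (1:ℝ)/2 ≤ ‖x - y‖ := by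
      intro n x hx y hy hxy
      have h := (happ n x hx y hy hxy).1
      have h2 := hhalf n
      linarith
    obtain ⟨S, hSsub, hSunc, hSsep⟩ := combine Yf hunc hsepY
    have hNsub : (⋃ n, S n) ⊆ {x : X | ‖x‖ = 1} := by
      rintro x hx
      obtain ⟨n, hn⟩ := Set.mem_iUnion.1 hx
      exact hsub n (hSsub n hn)
    obtain ⟨ε, hε, hno⟩ := h3 (⋃ n, S n) hNsub
      (fun hc => hSunc 0 (hc.mono (Set.subset_iUnion S 0)))
      ⟨1/6, by norm_num, hSsep⟩
    obtain ⟨n, hn⟩ := exists_nat_ge (1/ε)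
    have hεn : (1:ℝ)/((n:ℝ)+2) ≤ ε := by
      rw [div_le_iff₀ (by positivity)]
      have h1ε : (1:ℝ)/ε ≤ (n:ℝ) := hn
      rw [div_le_iff₀ hε] at h1ε
      nlinarith
    apply hno
    refine ⟨S n, Set.subset_iUnion S n, hSunc n, 1, one_pos, ?_⟩
    intro x hx y hy hxy
    have h := happ n x (hSsub n hx) y (hSsub n hy) hxy
    exact ⟨by linarith [h.1], by linarith [h.2]⟩
  tfae_have 5 → 2 := by
    rintro ⟨ε₁, hε₁, h5⟩ s hs
    have hm0 : 0 < min ε₁ 1 := lt_min hε₁ one_pos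
    have hm1 : min ε₁ 1 ≤ 1 := min_le_right _ _
    have hmε : min ε₁ 1 ≤ ε₁ := min_le_left _ _
    set m := min ε₁ 1 with hm
    refine ⟨s * m / 100, by positivity, ?_⟩
    rintro Y hY hYsep ⟨N', hsub, hN', r, hr, happ⟩
    have hnt : N'.Nontrivial := by
      by_contra h
      exact hN' ((Set.not_nontrivial_iff.1 h).countable)
    obtain ⟨x, hx, y, hy, hxy⟩ := hnt
    have hd1 : s ≤ ‖x - y‖ := hYsep x (hsub hx) y (hsub hy) hxy
    have hd2 : ‖x - y‖ < r + s * m / 100 := (happ x hx y hy hxy).2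
    have hrs : 99 * s / 100 < r := by nlinarith
    have hq1 : 3 * (s * m / 100) ≤ ε₁ * r := by
      have h1 : m * (99 * s / 100) ≤ ε₁ * r :=
        mul_le_mul hmε hrs.le (by positivity) hε₁.le
      nlinarith [mul_nonneg hs.le hm0.le]
    have hq2 : 3 * (s * m / 100) < r := by nlinarith [mul_nonneg hs.le hm0.le]
    obtain ⟨Y', hY's, hY'c, hY'a⟩ := keyL (by positivity) hq1 hq2 hN' happ
    exact h5 ⟨Y', hY's, hY'c, hY'a⟩
  tfae_have 5 → 4 := by
    rintro ⟨ε₁, hε₁, h5⟩ r hr _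
    have hm0 : 0 < min ε₁ 1 := lt_min hε₁ one_pos
    have hm1 : min ε₁ 1 ≤ 1 := min_le_right _ _
    have hmε : min ε₁ 1 ≤ ε₁ := min_le_left _ _
    set m := min ε₁ 1 with hm
    refine ⟨r * m / 100, by positivity, ?_⟩
    rintro ⟨Y, hYs, hYc, hYa⟩
    have hq1 : 3 * (r * m / 100) ≤ ε₁ * r := by
      have h1 : m * r ≤ ε₁ * r := mul_le_mul_of_nonneg_right hmε hr.le
      nlinarith [mul_nonneg hr.le hm0.le]
    have hq2 : 3 * (r * m / 100) < r := by nlinarith [mul_nonneg hr.le hm0.le]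
    obtain ⟨Y', hY's, hY'c, hY'a⟩ := keyL (by positivity) hq1 hq2 hYc hYa
    exact h5 ⟨Y', hY's, hY'c, hY'a⟩
  tfae_have 4 → 5 := by
    intro h4
    obtain ⟨ε, hε, h⟩ := h4 1 one_pos (by norm_num)
    exact ⟨ε, hε, h⟩
  tfae_finish

end
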